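/- For fixed real numbers a > b > 0, the function u(x) = ln((e^{ax} - 1)/(e^{bx} - 1)), extended continuously at x = 0 by u(0) = ln(a/b), is strictly convex on the real line. -/

import Mathlib

open Real

noncomputable def psi (y : ℝ) : ℝ := if y = 0 then 1 else y * Real.cosh y / Real.sinh y

lemma psi_zero : psi 0 = 1 := by simp [psi]

lemma psi_neg (y : ℝ) : psi (-y) = psi y := by
  unfold psi
  by_cases h : y = 0
  · simp [h]
  · have h' : -y ≠ 0 := by simpa using h
    rw [if_neg h', if_neg h, Real.cosh_neg, Real.sinh_neg]
    ring

lemma psi_of_ne (y : ℝ) (h : y ≠ 0) : psi y = y * Real.cosh y / Real.sinh y := by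
  simp [psi, h]

-- continuity
lemma continuous_psi : Continuous psi := by
  rw [continuous_iff_continuousAt]
  intro y
  by_cases h : y = 0
  · subst h
    rw [← continuousWithinAt_compl_self]
    have key : Filter.Tendsto (fun z : ℝ => z * Real.cosh z / Real.sinh z)
        (nhdsWithin 0 {(0:ℝ)}ᶜ) (nhds 1) := by
      have hslope : Filter.Tendsto (fun z : ℝ => Real.sinh z / z) (nhdsWithin 0 {(0:ℝ)}ᶜ) (nhds 1) := by
        have := (Real.hasDerivAt_sinh 0).tendsto_slope_zero
        refine Filter.Tendsto.congr (fun z => ?_) (by simpa [Real.cosh_zero, slope_def_field, Real.sinh_zero] using this)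
        rw [div_eq_inv_mul]
      have hinv : Filter.Tendsto (fun z : ℝ => z / Real.sinh z) (nhdsWithin 0 {(0:ℝ)}ᶜ) (nhds 1) := by
        have h2 := hslope.inv₀ (one_ne_zero)
        rw [inv_one] at h2
        exact h2.congr fun z => inv_div _ _
      have hcosh : Filter.Tendsto (fun z : ℝ => Real.cosh z) (nhdsWithin 0 {(0:ℝ)}ᶜ) (nhds 1) := by
        have : ContinuousAt Real.cosh 0 := Real.continuous_cosh.continuousAt
        have h2 := this.continuousWithinAt (s := {(0:ℝ)}ᶜ)
        simpa [ContinuousWithinAt, Real.cosh_zero] using h2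
      have := hinv.mul hcosh
      simp only [one_mul] at this
      refine Filter.Tendsto.congr (fun z => by ring) this
    have key2 : Filter.Tendsto psi (nhdsWithin 0 {(0:ℝ)}ᶜ) (nhds 1) := by
      refine key.congr' ?_
      filter_upwards [self_mem_nhdsWithin] with z hz
      simp only [Set.mem_compl_iff, Set.mem_singleton_iff] at hz
      simp [psi, hz]
    simpa [ContinuousWithinAt, psi] using key2
  · have hne : Real.sinh y ≠ 0 := Real.sinh_ne_zero.2 h
    have : ContinuousAt (fun z : ℝ => z * Real.cosh z / Real.sinh z) y := by
      exact ((continuous_id.mul Real.continuous_cosh).continuousAt).div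
        Real.continuous_sinh.continuousAt hne
    apply this.congr
    filter_upwards [isOpen_compl_singleton.mem_nhds (by simpa using h)] with z hz
    simp only [Set.mem_compl_iff, Set.mem_singleton_iff] at hz
    simp [psi, hz]

noncomputable def d1 (y : ℝ) : ℝ := (Real.cosh y * Real.sinh y - y) / Real.sinh y ^ 2
noncomputable def d2 (y : ℝ) : ℝ := 2 * (y * Real.cosh y - Real.sinh y) / Real.sinh y ^ 3

lemma hasDerivAt_psi {y : ℝ} (h : y ≠ 0) : HasDerivAt psi (d1 y) y := by
  have hs : Real.sinh y ≠ 0 := Real.sinh_ne_zero.2 h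
  have h1 : HasDerivAt (fun z : ℝ => z * Real.cosh z / Real.sinh z) (d1 y) y := by
    have := (((hasDerivAt_id y).mul (Real.hasDerivAt_cosh y)).div (Real.hasDerivAt_sinh y) hs)
    refine this.congr_deriv ?_
    have hc := Real.cosh_sq_sub_sinh_sq y
    simp only [d1, id_eq, Pi.mul_apply]
    field_simp
    linear_combination (-y) * hc
  refine h1.congr_of_eventuallyEq ?_
  filter_upwards [isOpen_compl_singleton.mem_nhds (by simpa using h)] with z hz
  simp only [Set.mem_compl_iff, Set.mem_singleton_iff] at hz
  simp [psi, hz]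

lemma hasDerivAt_d1 {y : ℝ} (h : y ≠ 0) : HasDerivAt d1 (d2 y) y := by
  have hs : Real.sinh y ≠ 0 := Real.sinh_ne_zero.2 h
  have hnum : HasDerivAt (fun z : ℝ => Real.cosh z * Real.sinh z - z)
      (Real.sinh y * Real.sinh y + Real.cosh y * Real.cosh y - 1) y := by
    have := ((Real.hasDerivAt_cosh y).mul (Real.hasDerivAt_sinh y)).sub (hasDerivAt_id y)
    exact this
  have hden : HasDerivAt (fun z : ℝ => Real.sinh z ^ 2) (2 * Real.sinh y * Real.cosh y) y := by
    have := (Real.hasDerivAt_sinh y).pow 2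
    refine this.congr_deriv ?_
    ring
  have hs2 : Real.sinh y ^ 2 ≠ 0 := pow_ne_zero 2 hs
  have := hnum.div hden hs2
  refine this.congr_deriv ?_
  have hc := Real.cosh_sq_sub_sinh_sq y
  simp only [d2]
  field_simp
  linear_combination (-Real.sinh y) * hc

lemma deriv_psi_eq {y : ℝ} (h : y ≠ 0) : deriv psi y = d1 y := (hasDerivAt_psi h).deriv

lemma deriv2_psi_eq {y : ℝ} (h : y ≠ 0) : deriv (deriv psi) y = d2 y := by
  have heq : deriv psi =ᶠ[nhds y] d1 := by
    filter_upwards [isOpen_compl_singleton.mem_nhds (by simpa using h)] with z hz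
    simp only [Set.mem_compl_iff, Set.mem_singleton_iff] at hz
    exact deriv_psi_eq hz
  rw [heq.deriv_eq]
  exact (hasDerivAt_d1 h).deriv

lemma ycosh_sub_sinh_pos {y : ℝ} (hy : 0 < y) : 0 < y * Real.cosh y - Real.sinh y := by
  have hmono : StrictMonoOn (fun z : ℝ => z * Real.cosh z - Real.sinh z) (Set.Ici 0) := by
    apply strictMonoOn_of_deriv_pos (convex_Ici 0)
    · exact ((continuous_id.mul Real.continuous_cosh).sub Real.continuous_sinh).continuousOn
    · intro z hz
      rw [interior_Ici, Set.mem_Ioi] at hz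
      have hd : HasDerivAt (fun z : ℝ => z * Real.cosh z - Real.sinh z) (z * Real.sinh z) z := by
        have := (((hasDerivAt_id z).mul (Real.hasDerivAt_cosh z)).sub (Real.hasDerivAt_sinh z))
        refine this.congr_deriv ?_
        simp only [id_eq]
        ring
      rw [hd.deriv]
      exact mul_pos hz (Real.sinh_pos_iff.2 hz)
  have := hmono (Set.self_mem_Ici) (le_of_lt hy : (0:ℝ) ≤ y) hy
  simpa using this

lemma d2_pos {y : ℝ} (hy : 0 < y) : 0 < d2 y := by
  have h1 := ycosh_sub_sinh_pos hy
  have h2 : 0 < Real.sinh y := Real.sinh_pos_iff.2 hy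
  unfold d2
  positivity

lemma strictConvexOn_psi_Ici : StrictConvexOn ℝ (Set.Ici 0) psi := by
  apply strictConvexOn_of_deriv2_pos (convex_Ici 0) continuous_psi.continuousOn
  intro y hy
  rw [interior_Ici, Set.mem_Ioi] at hy
  show 0 < deriv (deriv psi) y
  rw [deriv2_psi_eq (ne_of_gt hy)]
  exact d2_pos hy

lemma monotoneOn_psi_Ici : MonotoneOn psi (Set.Ici 0) := by
  have : StrictMonoOn psi (Set.Ici 0) := by
    apply strictMonoOn_of_deriv_pos (convex_Ici 0) continuous_psi.continuousOn
    intro y hy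
    rw [interior_Ici, Set.mem_Ioi] at hy
    rw [deriv_psi_eq (ne_of_gt hy)]
    have h2 : 0 < Real.sinh y := Real.sinh_pos_iff.2 hy
    have h3 : y < Real.sinh y := Real.self_lt_sinh_iff.2 hy
    have h4 : 1 ≤ Real.cosh y := Real.one_le_cosh y
    unfold d1
    have : 0 < Real.cosh y * Real.sinh y - y := by nlinarith
    positivity
  exact this.monotoneOn

lemma strictConvexOn_psi : StrictConvexOn ℝ Set.univ psi := by
  have heven := psi_neg
  have hconv := strictConvexOn_psi_Ici
  have hmono := monotoneOn_psi_Ici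
  -- strict monotonicity consequence: 0 ≤ c < y → psi c < psi y
  have hlt : ∀ c y : ℝ, 0 ≤ c → c < y → psi c < psi y := by
    intro c y hc hcy
    have hy : (0:ℝ) ≤ y := le_trans hc hcy.le
    have hmid : psi ((1/2 : ℝ) • c + (1/2 : ℝ) • y) < (1/2 : ℝ) • psi c + (1/2 : ℝ) • psi y :=
      hconv.2 (Set.mem_Ici.2 hc) (Set.mem_Ici.2 hy) (ne_of_lt hcy)
        (by norm_num) (by norm_num) (by norm_num)
    have h1 : psi c ≤ psi ((1/2 : ℝ) • c + (1/2 : ℝ) • y) := by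
      apply hmono (Set.mem_Ici.2 hc)
      · simp only [smul_eq_mul, Set.mem_Ici]; linarith
      · simp only [smul_eq_mul]; linarith
    simp only [smul_eq_mul] at hmid h1 ⊢
    linarith
  have main : ∀ x y : ℝ, x < y → ∀ t s : ℝ, 0 < t → 0 < s → t + s = 1 →
      psi (t * x + s * y) < t * psi x + s * psi y := by
    intro x y hxy t s ht hs hts
    rcases le_or_gt 0 x with hx | hx
    · have := hconv.2 (Set.mem_Ici.2 hx) (Set.mem_Ici.2 (le_trans hx hxy.le)) (ne_of_lt hxy) ht hs hts
      simpa using this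
    rcases le_or_gt y 0 with hy | hy
    · have hx' : (0:ℝ) ≤ -y := by linarith
      have := hconv.2 (Set.mem_Ici.2 hx') (Set.mem_Ici.2 (by linarith : (0:ℝ) ≤ -x))
        (by intro hcon; apply ne_of_lt hxy; linarith [neg_injective hcon]) hs ht (by linarith)
      simp only [smul_eq_mul, heven] at this
      calc psi (t * x + s * y) = psi (s * -y + t * -x) := by
            rw [← heven]; ring_nf
          _ < s * psi y + t * psi x := this
          _ = t * psi x + s * psi y := by ring
    -- x < 0 < y
    · set m := t * x + s * y with hm
      have hmabs : psi m = psi |m| := by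
        rcases abs_cases m with ⟨h1, _⟩ | ⟨h1, _⟩
        · rw [h1]
        · rw [h1, heven]
      rcases eq_or_ne (-x) y with hxe | hxe
      · -- x = -y
        have hfxy : psi x = psi y := by rw [← heven x, hxe]
        have hmy : |m| < y := by
          rw [abs_lt]
          constructor <;> nlinarith
        have : psi |m| < psi y := hlt _ _ (abs_nonneg m) hmy
        rw [hmabs]
        calc psi |m| < psi y := this
          _ = t * psi x + s * psi y := by rw [hfxy]; linear_combination (-(psi y)) * hts
      · -- |x| ≠ y
        have hM : |m| ≤ t * (-x) + s * y := by
          rw [abs_le]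
          constructor <;> nlinarith
        have hMmem : (0:ℝ) ≤ t * (-x) + s * y := le_trans (abs_nonneg m) hM
        have h2 : psi |m| ≤ psi (t * (-x) + s * y) :=
          hmono (Set.mem_Ici.2 (abs_nonneg m)) (Set.mem_Ici.2 hMmem) hM
        have h3 : psi (t * (-x) + s * y) < t * psi (-x) + s * psi y := by
          have := hconv.2 (Set.mem_Ici.2 (by linarith : (0:ℝ) ≤ -x)) (Set.mem_Ici.2 hy.le)
            hxe ht hs hts
          simpa using this
        rw [hmabs]
        calc psi |m| ≤ psi (t * (-x) + s * y) := h2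
          _ < t * psi (-x) + s * psi y := h3
          _ = t * psi x + s * psi y := by rw [heven]
  refine ⟨convex_univ, ?_⟩
  intro x _ y _ hxy t s ht hs hts
  simp only [smul_eq_mul]
  rcases lt_or_gt_of_ne hxy with h | h
  · exact main x y h t s ht hs hts
  · have := main y x h s t hs ht (by linarith)
    calc psi (t * x + s * y) = psi (s * y + t * x) := by ring_nf
      _ < s * psi y + t * psi x := this
      _ = t * psi x + s * psi y := by ring

theorem stmt0 (a b : ℝ) (hab : a > b) (hb : b > 0) :
    StrictConvexOn ℝ Set.univ (fun x : ℝ =>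
      if x = 0 then Real.log (a / b)
      else Real.log ((Real.exp (a * x) - 1) / (Real.exp (b * x) - 1))) := by
  have ha : 0 < a := lt_trans hb hab
  have hba : b ≤ a := le_of_lt hab
  -- continuity of the integrand
  have hcont : ∀ x : ℝ, ContinuousOn (fun s : ℝ => psi (s * x / 2) / s) (Set.Icc b a) := by
    intro x
    apply ContinuousOn.div
    · exact (continuous_psi.comp (by continuity)).continuousOn
    · exact continuousOn_id
    · intro r hr
      exact ne_of_gt (lt_of_lt_of_le hb hr.1)
  -- log(exp(c x) - 1) decomposition
  have hdecomp : ∀ c x : ℝ, 0 < c → x ≠ 0 →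
      Real.log (Real.exp (c * x) - 1)
        = c * x / 2 + Real.log 2 + Real.log (Real.sinh (c * x / 2)) := by
    intro c x hc hx
    have hcx : c * x / 2 ≠ 0 := by
      intro h; apply hx
      rcases mul_eq_zero.1 (by linarith [h] : c * x = 0) with h' | h'
      · exact absurd h' (ne_of_gt hc)
      · exact h'
    have hsinh : Real.sinh (c * x / 2) ≠ 0 := Real.sinh_ne_zero.2 hcx
    have hprod : Real.exp (c * x) - 1 = 2 * Real.exp (c * x / 2) * Real.sinh (c * x / 2) := by
      rw [Real.sinh_eq]
      have : Real.exp (c * x) = Real.exp (c * x / 2) * Real.exp (c * x / 2) := by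
        rw [← Real.exp_add]; ring_nf
      rw [this, Real.exp_neg]
      field_simp
    rw [hprod, Real.log_mul (by positivity) hsinh,
      Real.log_mul (by norm_num) (Real.exp_ne_zero _), Real.log_exp]
    ring
  -- the integral identity
  have key : ∀ x : ℝ, (if x = 0 then Real.log (a / b)
      else Real.log ((Real.exp (a * x) - 1) / (Real.exp (b * x) - 1)))
      = (a - b) * x / 2 + ∫ s in b..a, psi (s * x / 2) / s := by
    intro x
    by_cases hx : x = 0
    · subst hx
      rw [if_pos rfl]
      have h1 : (fun s : ℝ => psi (s * 0 / 2) / s) = fun s : ℝ => 1 / s := by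
        funext s; simp [psi]
      rw [h1, integral_one_div (by
        rw [Set.uIcc_of_le hba]
        intro hmem
        exact absurd hmem.1 (not_le.2 hb))]
      ring
    · rw [if_neg hx]
      have hFTC : (∫ s in b..a, psi (s * x / 2) / s)
          = Real.log (Real.sinh (a * x / 2)) - Real.log (Real.sinh (b * x / 2)) := by
        apply intervalIntegral.integral_eq_sub_of_hasDerivAt
        · intro s hs
          rw [Set.uIcc_of_le hba] at hs
          have hspos : 0 < s := lt_of_lt_of_le hb hs.1
          have hz : s * x / 2 ≠ 0 := by
            intro h; apply hx
            rcases mul_eq_zero.1 (by linarith [h] : s * x = 0) with h' | h'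
            · exact absurd h' (ne_of_gt hspos)
            · exact h'
          have hsinh : Real.sinh (s * x / 2) ≠ 0 := Real.sinh_ne_zero.2 hz
          have h1 : HasDerivAt (fun r : ℝ => r * x / 2) (x / 2) s := by
            have := ((hasDerivAt_id s).mul_const x).div_const 2
            simpa using this
          have h2 := (Real.hasDerivAt_sinh (s * x / 2)).comp s h1
          have h3 := (Real.hasDerivAt_log hsinh).comp s h2
          refine h3.congr_deriv ?_
          rw [psi_of_ne _ hz]
          field_simp
        · exact ((hcont x).mono (by rw [Set.uIcc_of_le hba])).intervalIntegrable
      rw [hFTC]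
      have hea : Real.exp (a * x) - 1 ≠ 0 := by
        intro h
        exact hx (by simpa [Real.exp_eq_one_iff, ne_of_gt ha] using sub_eq_zero.1 h)
      have heb : Real.exp (b * x) - 1 ≠ 0 := by
        intro h
        exact hx (by simpa [Real.exp_eq_one_iff, ne_of_gt hb] using sub_eq_zero.1 h)
      rw [Real.log_div hea heb, hdecomp a x ha hx, hdecomp b x hb hx]
      ring
  -- rewrite the function
  have hfun : (fun x : ℝ =>
      if x = 0 then Real.log (a / b)
      else Real.log ((Real.exp (a * x) - 1) / (Real.exp (b * x) - 1)))
      = fun x : ℝ => (a - b) * x / 2 + ∫ s in b..a, psi (s * x / 2) / s := funext key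
  rw [hfun]
  refine ⟨convex_univ, ?_⟩
  intro x _ y _ hxy t s ht hs hts
  simp only [smul_eq_mul]
  have hIstrict : (∫ r in b..a, psi (r * (t * x + s * y) / 2) / r)
      < ∫ r in b..a, (t * psi (r * x / 2) + s * psi (r * y / 2)) / r := by
    apply intervalIntegral.integral_lt_integral_of_continuousOn_of_le_of_exists_lt hab
    · exact hcont _
    · apply ContinuousOn.div
      · exact ((continuous_const.mul (continuous_psi.comp (by continuity))).add
          (continuous_const.mul (continuous_psi.comp (by continuity)))).continuousOn
      · exact continuousOn_id
      · intro r hr; exact ne_of_gt (lt_of_lt_of_le hb hr.1)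
    · intro r hr
      have hrpos : 0 < r := lt_of_lt_of_le hb hr.1.le
      have hne : r * x / 2 ≠ r * y / 2 := by
        intro h; apply hxy
        field_simp at h
        exact h
      have := strictConvexOn_psi.2 (Set.mem_univ (r * x / 2)) (Set.mem_univ (r * y / 2))
        hne ht hs hts
      simp only [smul_eq_mul] at this
      have harg : r * (t * x + s * y) / 2 = t * (r * x / 2) + s * (r * y / 2) := by ring
      rw [harg]
      exact le_of_lt ((div_lt_div_iff_of_pos_right hrpos).2 this)
    · refine ⟨a, Set.right_mem_Icc.2 hba, ?_⟩
      have hrpos : 0 < a := ha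
      have hne : a * x / 2 ≠ a * y / 2 := by
        intro h; apply hxy
        field_simp at h
        exact h
      have := strictConvexOn_psi.2 (Set.mem_univ (a * x / 2)) (Set.mem_univ (a * y / 2))
        hne ht hs hts
      simp only [smul_eq_mul] at this
      have harg : a * (t * x + s * y) / 2 = t * (a * x / 2) + s * (a * y / 2) := by ring
      rw [harg]
      exact (div_lt_div_iff_of_pos_right hrpos).2 this
  have hint1 : IntervalIntegrable (fun r : ℝ => t * (psi (r * x / 2) / r)) MeasureTheory.volume b a := by
    apply ContinuousOn.intervalIntegrable
    rw [Set.uIcc_of_le hba]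
    exact (hcont x).const_smul t
  have hint2 : IntervalIntegrable (fun r : ℝ => s * (psi (r * y / 2) / r)) MeasureTheory.volume b a := by
    apply ContinuousOn.intervalIntegrable
    rw [Set.uIcc_of_le hba]
    exact (hcont y).const_smul s
  have hIsplit : (∫ r in b..a, (t * psi (r * x / 2) + s * psi (r * y / 2)) / r)
      = t * (∫ r in b..a, psi (r * x / 2) / r) + s * (∫ r in b..a, psi (r * y / 2) / r) := by
    have h1 : (fun r : ℝ => (t * psi (r * x / 2) + s * psi (r * y / 2)) / r)
        = fun r : ℝ => t * (psi (r * x / 2) / r) + s * (psi (r * y / 2) / r) := by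
      funext r; ring
    rw [h1, intervalIntegral.integral_add hint1 hint2,
      intervalIntegral.integral_const_mul, intervalIntegral.integral_const_mul]
  have := hIstrict.trans_eq hIsplit
  nlinarith [this, hts]
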